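/- Let n ≥ 0 and let W be a real linear subspace of the space of complex symmetric (n+1)×(n+1) matrices such that conj(Z₁)·Z₂ = conj(Z₂)·Z₁ for all Z₁, Z₂ ∈ W, where conj denotes entrywise complex conjugation. Then dim_ℝ W ≤ n+1. Moreover, the space of real diagonal (n+1)×(n+1) matrices is such a subspace of real dimension exactly n+1. -/

import Mathlib

open Matrix

open Module Submodule LinearMap RealInnerProductSpace

/-- Restriction of a subspace of endomorphisms to an invariant subspace, as a linear map. -/
def restrictMap {V : Type*} [AddCommGroup V] [Module ℝ V]
    (S : Submodule ℝ (V →ₗ[ℝ] V)) (E : Submodule ℝ V)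
    (h : ∀ T ∈ S, ∀ x ∈ E, T x ∈ E) : S →ₗ[ℝ] (E →ₗ[ℝ] E) where
  toFun T := (T : V →ₗ[ℝ] V).restrict (fun x hx => h T T.2 x hx)
  map_add' T₁ T₂ := by ext x; simp [LinearMap.restrict_apply]
  map_smul' c T := by ext x; simp [LinearMap.restrict_apply]

theorem restrictMap_coe {V : Type*} [AddCommGroup V] [Module ℝ V]
    (S : Submodule ℝ (V →ₗ[ℝ] V)) (E : Submodule ℝ V)
    (h : ∀ T ∈ S, ∀ x ∈ E, T x ∈ E) (T : S) (x : E) :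
    (restrictMap S E h T x : V) = (T : V →ₗ[ℝ] V) x := rfl

/-- A commuting family of symmetric operators on a nontrivial finite-dimensional real
inner product space has a common eigenvector. -/
theorem common_eig (N : ℕ) : ∀ (V : Type) [NormedAddCommGroup V] [InnerProductSpace ℝ V]
    [FiniteDimensional ℝ V] [Nontrivial V]
    (S : Submodule ℝ (V →ₗ[ℝ] V)),
    finrank ℝ V ≤ N →
    (∀ T ∈ S, T.IsSymmetric) →
    (∀ T₁ ∈ S, ∀ T₂ ∈ S, T₁ ∘ₗ T₂ = T₂ ∘ₗ T₁) →
    ∃ v : V, v ≠ 0 ∧ ∀ T ∈ S, ∃ c : ℝ, T v = c • v := by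
  induction N with
  | zero =>
    intro V _ _ _ _ S hN hsym hcomm
    exact absurd (le_trans Module.finrank_pos hN) (by simp)
  | succ N ih =>
    intro V _ _ _ _ S hN hsym hcomm
    by_cases hsc : ∀ T ∈ S, ∃ c : ℝ, T = c • (LinearMap.id : V →ₗ[ℝ] V)
    · obtain ⟨v, hv⟩ := exists_ne (0 : V)
      exact ⟨v, hv, fun T hT => by
        obtain ⟨c, rfl⟩ := hsc T hT; exact ⟨c, rfl⟩⟩
    · push_neg at hsc
      obtain ⟨T₀, hT₀S, hT₀⟩ := hsc
      obtain ⟨μ, hμ⟩ : ∃ μ : ℝ, Module.End.HasEigenvalue T₀ μ :=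
        ⟨_, (hsym T₀ hT₀S).hasEigenvalue_iSup_of_finiteDimensional⟩
      set E := Module.End.eigenspace T₀ μ with hE
      have hEbot : E ≠ ⊥ := hμ
      have hEtop : E ≠ ⊤ := by
        intro htop
        refine hT₀ μ (LinearMap.ext fun x => ?_)
        have hx : x ∈ E := htop ▸ Submodule.mem_top
        rw [hE, Module.End.mem_eigenspace_iff] at hx
        simpa using hx
      -- all elements of S preserve E
      have hinv : ∀ T ∈ S, ∀ x ∈ E, T x ∈ E := by
        intro T hT x hx
        rw [Module.End.mem_eigenspace_iff] at hx ⊢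
        have := congrArg (fun f => f x) (hcomm T₀ hT₀S T hT)
        simp only [LinearMap.comp_apply] at this
        rw [this, hx, _root_.map_smul]
      haveI : Nontrivial E := Submodule.nontrivial_iff_ne_bot.mpr hEbot
      have hElt : finrank ℝ E < finrank ℝ V := Submodule.finrank_lt hEtop
      set R := restrictMap S E hinv
      obtain ⟨v, hv0, hv⟩ := ih E (LinearMap.range R)
        (by omega)
        (by
          rintro T' ⟨T, rfl⟩
          intro x y
          exact hsym T T.2 (x : V) (y : V))
        (by
          rintro T₁' ⟨T₁, rfl⟩ T₂' ⟨T₂, rfl⟩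
          ext x
          have := congrArg (fun f => f (x : V)) (hcomm T₁ T₁.2 T₂ T₂.2)
          simp only [LinearMap.comp_apply] at this
          exact this)
      refine ⟨(v : V), by simpa using hv0, ?_⟩
      intro T hT
      obtain ⟨c, hc⟩ := hv (R ⟨T, hT⟩) ⟨⟨T, hT⟩, rfl⟩
      exact ⟨c, congrArg (Subtype.val) hc⟩

/-- Key bound: a subspace of commuting symmetric operators anticommuting with a complex
structure `J` has dimension at most half the dimension of the space. -/
theorem key_bound (N : ℕ) : ∀ (V : Type) [NormedAddCommGroup V] [InnerProductSpace ℝ V]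
    [FiniteDimensional ℝ V]
    (S : Submodule ℝ (V →ₗ[ℝ] V)) (J : V →ₗ[ℝ] V),
    finrank ℝ V ≤ N →
    (∀ T ∈ S, T.IsSymmetric) →
    (∀ T₁ ∈ S, ∀ T₂ ∈ S, T₁ ∘ₗ T₂ = T₂ ∘ₗ T₁) →
    (∀ x : V, J (J x) = -x) →
    (∀ x y : V, ⟪J x, J y⟫ = ⟪x, y⟫) →
    (∀ T ∈ S, ∀ x : V, T (J x) = -(J (T x))) →
    2 * finrank ℝ S ≤ finrank ℝ V := by
  induction N with
  | zero =>
    intro V _ _ _ S J hN hsym hcomm hJ2 hJO hJa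
    have hV : finrank ℝ V = 0 := by omega
    haveI : Subsingleton V := Module.finrank_zero_iff.mp hV
    have : S = ⊥ := by
      rw [Submodule.eq_bot_iff]; intro T _
      ext x; simp [Subsingleton.elim x 0]
    rw [this, hV]
    simp [finrank_bot]
  | succ N ih =>
    intro V _ _ _ S J hN hsym hcomm hJ2 hJO hJa
    by_cases hSbot : S = ⊥
    · rw [hSbot]
      simp [finrank_bot]
    · -- V is nontrivial
      haveI : Nontrivial V := by
        by_contra h
        rw [not_nontrivial_iff_subsingleton] at h
        apply hSbot
        rw [Submodule.eq_bot_iff]; intro T _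
        ext x; simp [Subsingleton.elim x 0]
      -- common eigenvector
      obtain ⟨v, hv0, hv⟩ := common_eig (N + 1) V S hN hsym hcomm
      -- the eigenvalue functional
      obtain ⟨lam, hlam_eig⟩ : ∃ lam : S →ₗ[ℝ] ℝ, ∀ T : S, (T : V →ₗ[ℝ] V) v = lam T • v := by
        refine ⟨{ toFun := fun T => ⟪(T : V →ₗ[ℝ] V) v, v⟫ / ‖v‖ ^ 2
                  map_add' := fun T₁ T₂ => by simp [inner_add_left, add_div]
                  map_smul' := fun c T => by simp [inner_smul_left, mul_div_assoc] }, ?_⟩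
        intro T
        obtain ⟨c, hc⟩ := hv T T.2
        have h5 : ⟪(T : V →ₗ[ℝ] V) v, v⟫ / ‖v‖ ^ 2 = c := by
          rw [hc, real_inner_smul_left, real_inner_self_eq_norm_sq]
          have hnz : ‖v‖ ^ 2 ≠ 0 := pow_ne_zero 2 (norm_ne_zero_iff.mpr hv0)
          field_simp
        simpa [h5] using hc
      -- u = J v
      obtain ⟨u, hu⟩ : ∃ u : V, u = J v := ⟨J v, rfl⟩
      have hJu : J u = -v := by rw [hu, hJ2]
      have hu0 : u ≠ 0 := by
        intro h
        apply hv0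
        have h2 : J u = J 0 := congrArg J h
        rw [hJu, map_zero] at h2
        simpa using h2
      have hTu : ∀ T : S, (T : V →ₗ[ℝ] V) u = -(lam T • u) := by
        intro T
        rw [hu, hJa T T.2 v, hlam_eig T, _root_.map_smul]
      -- linear independence of v, u
      have hli : LinearIndependent ℝ ![v, u] := by
        rw [LinearIndependent.pair_iff]
        intro a b hab
        have hab2 : a • u - b • v = 0 := by
          have h2 : a • J v + b • J u = J 0 := by
            rw [← _root_.map_smul, ← _root_.map_smul, ← _root_.map_add, hab]
          rw [← hu, hJu, map_zero] at h2
          linear_combination (norm := module) h2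
        have h3 := congrArg (fun x : V => a • x) hab
        have h4 := congrArg (fun x : V => b • x) hab2
        simp only [smul_add, smul_sub, smul_smul, smul_zero] at h3 h4
        have h1 : (a ^ 2 + b ^ 2) • v = 0 := by
          linear_combination (norm := module) h3 - h4
        have h6 : a ^ 2 + b ^ 2 = 0 := by
          by_contra h
          exact hv0 (by simpa [h] using smul_eq_zero.mp h1)
        constructor <;> nlinarith [sq_nonneg a, sq_nonneg b]
      -- the plane P spanned by v and u
      obtain ⟨P, hP⟩ : ∃ P : Submodule ℝ V, P = Submodule.span ℝ {v, u} := ⟨_, rfl⟩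
      have hvP : v ∈ P := hP ▸ Submodule.subset_span (by simp)
      have huP : u ∈ P := hP ▸ Submodule.subset_span (by simp)
      have hPrank : finrank ℝ P = 2 := by
        have hr : Set.range ![v, u] = {v, u} := by
          simp [Matrix.range_cons, Matrix.range_empty]
          exact Set.pair_comm u v
        rw [hP, ← hr, finrank_span_eq_card hli, Fintype.card_fin]
      -- P is invariant under S and J
      have hPinvT : ∀ T ∈ S, ∀ x ∈ P, T x ∈ P := by
        intro T hT x hx
        rw [hP] at hx
        have hle : Submodule.span ℝ {v, u} ≤ P.comap T := by
          rw [Submodule.span_le]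
          intro y hy
          simp only [Set.mem_insert_iff, Set.mem_singleton_iff] at hy
          simp only [SetLike.mem_coe, Submodule.mem_comap]
          rcases hy with h | h
          · have h1 : T v = lam ⟨T, hT⟩ • v := hlam_eig ⟨T, hT⟩
            rw [h, h1]
            exact Submodule.smul_mem P _ hvP
          · have h2 : T u = -(lam ⟨T, hT⟩ • u) := hTu ⟨T, hT⟩
            rw [h, h2]
            exact Submodule.neg_mem P (Submodule.smul_mem P _ huP)
        exact hle hx
      have hPinvJ : ∀ x ∈ P, J x ∈ P := by
        intro x hx
        rw [hP] at hx
        have hle : Submodule.span ℝ {v, u} ≤ P.comap J := by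
          rw [Submodule.span_le]
          intro y hy
          simp only [Set.mem_insert_iff, Set.mem_singleton_iff] at hy
          simp only [SetLike.mem_coe, Submodule.mem_comap]
          rcases hy with h | h
          · rw [h, ← hu]; exact huP
          · rw [h, hJu]; exact Submodule.neg_mem P hvP
        exact hle hx
      -- the orthogonal complement U
      obtain ⟨U, hU⟩ : ∃ U : Submodule ℝ V, U = Pᗮ := ⟨_, rfl⟩
      have hUinvT : ∀ T ∈ S, ∀ x ∈ U, T x ∈ U := by
        intro T hT x hx
        rw [hU, Submodule.mem_orthogonal] at hx ⊢
        intro y hy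
        rw [real_inner_comm, hsym T hT x y, real_inner_comm]
        exact hx _ (hPinvT T hT y hy)
      have hUinvJ : ∀ x ∈ U, J x ∈ U := by
        intro x hx
        rw [hU, Submodule.mem_orthogonal] at hx ⊢
        intro y hy
        have h2 : ⟪J (-(J y)), J x⟫ = ⟪-(J y), x⟫ := hJO _ _
        rw [map_neg, hJ2 y, neg_neg] at h2
        rw [h2, inner_neg_left]
        simp [hx _ (hPinvJ y hy)]
      have hUrank : finrank ℝ U + 2 = finrank ℝ V := by
        have h2 := Submodule.finrank_add_finrank_orthogonal P
        rw [hU, ← hPrank]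
        omega
      -- S₀ : elements of S with eigenvalue 0, as a submodule of End V
      obtain ⟨S₀, hS₀⟩ : ∃ S₀ : Submodule ℝ (V →ₗ[ℝ] V),
          S₀ = (LinearMap.ker lam).map S.subtype := ⟨_, rfl⟩
      have hS₀S : ∀ T ∈ S₀, T ∈ S := by
        intro T hT
        rw [hS₀] at hT
        obtain ⟨T', _, rfl⟩ := hT
        exact T'.2
      have hS₀v : ∀ T ∈ S₀, T v = 0 ∧ T u = 0 := by
        intro T hT
        rw [hS₀] at hT
        obtain ⟨T', hT'0, rfl⟩ := hT
        have hT'0 : lam T' = 0 := hT'0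
        constructor
        · rw [show (S.subtype T') v = (T' : V →ₗ[ℝ] V) v from rfl, hlam_eig T', hT'0, zero_smul]
        · rw [show (S.subtype T') u = (T' : V →ₗ[ℝ] V) u from rfl, hTu T', hT'0, zero_smul,
            neg_zero]
      have hS₀rank : finrank ℝ S ≤ finrank ℝ S₀ + 1 := by
        have h1 := LinearMap.finrank_range_add_finrank_ker lam
        have h2 : finrank ℝ (LinearMap.range lam) ≤ 1 := by
          simpa using Submodule.finrank_le (LinearMap.range lam)
        have h3 : finrank ℝ S₀ = finrank ℝ (LinearMap.ker lam) := by
          rw [hS₀]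
          exact Submodule.finrank_map_subtype_eq S (LinearMap.ker lam)
        omega
      -- restrict S₀ to U
      have hS₀invU : ∀ T ∈ S₀, ∀ x ∈ U, T x ∈ U := fun T hT => hUinvT T (hS₀S T hT)
      obtain ⟨R, hR⟩ : ∃ R : S₀ →ₗ[ℝ] (U →ₗ[ℝ] U), R = restrictMap S₀ U hS₀invU := ⟨_, rfl⟩
      have hRcoe : ∀ (T : S₀) (x : U), ((R T x : U) : V) = (T : V →ₗ[ℝ] V) (x : V) := by
        intro T x; rw [hR]; rfl
      have hRinj : Function.Injective R := by
        rw [← LinearMap.ker_eq_bot, Submodule.eq_bot_iff]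
        intro T hT0
        rw [LinearMap.mem_ker] at hT0
        have hker : LinearMap.ker (T : V →ₗ[ℝ] V) = ⊤ := by
          rw [eq_top_iff]
          have hPle : P ≤ LinearMap.ker (T : V →ₗ[ℝ] V) := by
            rw [hP, Submodule.span_le]
            intro y hy
            simp only [Set.mem_insert_iff, Set.mem_singleton_iff] at hy
            simp only [SetLike.mem_coe, LinearMap.mem_ker]
            rcases hy with h | h
            · rw [h]; exact (hS₀v T T.2).1
            · rw [h]; exact (hS₀v T T.2).2
          have hUle : U ≤ LinearMap.ker (T : V →ₗ[ℝ] V) := by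
            intro x hx
            rw [LinearMap.mem_ker]
            have h2 : ((R T ⟨x, hx⟩ : U) : V) = (T : V →ₗ[ℝ] V) x := hRcoe T ⟨x, hx⟩
            rw [hT0] at h2
            simpa using h2.symm
          have hsup : P ⊔ U = ⊤ := by
            rw [hU]
            exact Submodule.isCompl_orthogonal_of_hasOrthogonalProjection.sup_eq_top
          rw [← hsup]
          exact sup_le hPle hUle
        exact Subtype.ext (LinearMap.ker_eq_top.mp hker)
      have hRrank : finrank ℝ (LinearMap.range R) = finrank ℝ S₀ :=
        LinearMap.finrank_range_of_inj hRinj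
      -- J restricted to U
      obtain ⟨JU, hJU⟩ : ∃ JU : U →ₗ[ℝ] U, JU = J.restrict hUinvJ := ⟨_, rfl⟩
      have hJUcoe : ∀ x : U, ((JU x : U) : V) = J (x : V) := by
        intro x; rw [hJU]; rfl
      -- apply the induction hypothesis on U
      have hmain := ih U (LinearMap.range R) JU
        (by omega)
        (by
          rintro T' ⟨T, rfl⟩ x y
          show ⟪((R T x : U) : V), (y : V)⟫ = ⟪(x : V), ((R T y : U) : V)⟫
          rw [hRcoe, hRcoe]
          exact hsym (T : V →ₗ[ℝ] V) (hS₀S T T.2) (x : V) (y : V))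
        (by
          rintro T₁' ⟨T₁, rfl⟩ T₂' ⟨T₂, rfl⟩
          ext x
          have h2 := congrArg (fun f => f (x : V)) (hcomm (T₁ : V →ₗ[ℝ] V) (hS₀S T₁ T₁.2)
            (T₂ : V →ₗ[ℝ] V) (hS₀S T₂ T₂.2))
          simp only [LinearMap.comp_apply] at h2
          show (((R T₁) ((R T₂) x) : U) : V) = (((R T₂) ((R T₁) x) : U) : V)
          rw [hRcoe, hRcoe, hRcoe, hRcoe]
          exact h2)
        (by
          intro x
          apply Subtype.ext
          rw [show ((-x : U) : V) = -(x : V) from rfl, ← hJ2 (x : V), hJUcoe, hJUcoe])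
        (by
          intro x y
          rw [show (inner ℝ (JU x) (JU y) : ℝ) = ⟪((JU x : U) : V), ((JU y : U) : V)⟫ from rfl,
            hJUcoe, hJUcoe]
          exact hJO _ _)
        (by
          rintro T' ⟨T, rfl⟩ x
          apply Subtype.ext
          rw [show ((-(JU (R T x)) : U) : V) = -((JU (R T x) : U) : V) from rfl,
            hJUcoe, hRcoe, hRcoe, hJUcoe]
          exact hJa (T : V →ₗ[ℝ] V) (hS₀S T T.2) (x : V))
      omega

open Module Submodule LinearMap RealInnerProductSpace Matrix

variable {m : ℕ}

noncomputable section

/-- The conjugate-linear-made-real-linear operator `x ↦ Z ⬝ star x`. -/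
def TL (Z : Matrix (Fin m) (Fin m) ℂ) : (Fin m → ℂ) →ₗ[ℝ] (Fin m → ℂ) where
  toFun x := Z.mulVec (star x)
  map_add' x y := by
    show Z *ᵥ star (x + y) = Z *ᵥ star x + Z *ᵥ star y
    rw [star_add, Matrix.mulVec_add]
  map_smul' r x := by
    have h : star (r • x) = r • star x := by
      funext i
      simp [Pi.smul_apply, star_smul]
    show Z *ᵥ star (r • x) = (RingHom.id ℝ) r • (Z *ᵥ star x)
    rw [h, RingHom.id_apply, Matrix.mulVec_smul]

theorem TL_apply (Z : Matrix (Fin m) (Fin m) ℂ) (x : Fin m → ℂ) :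
    TL Z x = Z.mulVec (star x) := rfl

/-- `Z ↦ TL Z` as a real-linear map. -/
def PhiL (m : ℕ) : Matrix (Fin m) (Fin m) ℂ →ₗ[ℝ] ((Fin m → ℂ) →ₗ[ℝ] (Fin m → ℂ)) where
  toFun := TL
  map_add' Z₁ Z₂ := by ext x; simp [TL_apply, Matrix.add_mulVec]; ring
  map_smul' r Z := by ext x; simp [TL_apply, Matrix.smul_mulVec]; ring

theorem PhiL_inj (m : ℕ) : Function.Injective (PhiL m) := by
  rw [← LinearMap.ker_eq_bot, Submodule.eq_bot_iff]
  intro Z hZ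
  rw [LinearMap.mem_ker] at hZ
  ext i j
  have h1 : TL Z (Pi.single j 1 : Fin m → ℂ) = 0 := by rw [show TL Z = 0 from hZ]; rfl
  have h2 : star (Pi.single j (1 : ℂ) : Fin m → ℂ) = (Pi.single j 1 : Fin m → ℂ) := by
    funext k
    rcases eq_or_ne k j with rfl | hkj
    · simp
    · simp [Pi.single_apply, hkj]
  have h3 := congrFun h1 i
  rw [TL_apply, h2, Matrix.mulVec_single] at h3
  simpa using h3

/-- The identification of `Fin m → ℂ` with a real Euclidean space. -/
def eE (m : ℕ) : (Fin m → ℂ) ≃ₗ[ℝ] EuclideanSpace ℝ (Fin m × Fin 2) where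
  toFun x := WithLp.toLp 2 fun p : Fin m × Fin 2 => if p.2 = 0 then (x p.1).re else (x p.1).im
  invFun y := fun i => ⟨y (i, 0), y (i, 1)⟩
  left_inv x := by funext i; apply Complex.ext <;> simp
  right_inv y := by
    ext p
    obtain ⟨i, j⟩ := p
    fin_cases j <;> simp
  map_add' x y := by
    ext p
    obtain ⟨i, j⟩ := p
    fin_cases j <;> simp
  map_smul' r x := by
    ext p
    obtain ⟨i, j⟩ := p
    fin_cases j <;> simp

theorem inner_eE (x y : Fin m → ℂ) :
    ⟪eE m x, eE m y⟫ = ∑ i, ((starRingEnd ℂ) (x i) * y i).re := by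
  rw [PiLp.inner_apply]
  rw [Fintype.sum_prod_type]
  refine Finset.sum_congr rfl fun i _ => ?_
  rw [Fin.sum_univ_two]
  simp only [RCLike.inner_apply', conj_trivial]
  show (eE m x) (i, 0) * (eE m y) (i, 0) + (eE m x) (i, 1) * (eE m y) (i, 1) = _
  simp only [eE, LinearEquiv.coe_mk, Equiv.coe_fn_mk]
  norm_num [Complex.mul_re]

theorem conj_mulVec (A : Matrix (Fin m) (Fin m) ℂ) (v : Fin m → ℂ) :
    star (A.mulVec (star v)) = (A.map (starRingEnd ℂ)).mulVec v := by
  funext i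
  simp only [Pi.star_apply, Matrix.mulVec, dotProduct, Matrix.map_apply]
  rw [star_sum]
  refine Finset.sum_congr rfl fun j _ => ?_
  simp [star_mul', mul_comm]

theorem symmB (Z : Matrix (Fin m) (Fin m) ℂ) (hZ : Zᵀ = Z) (x y : Fin m → ℂ) :
    ∑ i, ((starRingEnd ℂ) ((Z.mulVec (star x)) i) * y i).re
      = ∑ i, ((starRingEnd ℂ) (x i) * (Z.mulVec (star y)) i).re := by
  have hsym : ∀ i j, Z j i = Z i j := fun i j => by
    conv_lhs => rw [← hZ]
    rfl
  have e1 : ∑ i, ((starRingEnd ℂ) ((Z.mulVec (star x)) i) * y i)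
      = ∑ i, ∑ j, (starRingEnd ℂ) (Z i j) * (x j * y i) := by
    refine Finset.sum_congr rfl fun i _ => ?_
    simp only [Matrix.mulVec, dotProduct, Pi.star_apply]
    rw [map_sum, Finset.sum_mul]
    refine Finset.sum_congr rfl fun j _ => ?_
    rw [_root_.map_mul]
    simp only [RCLike.star_def, Complex.conj_conj]
    ring
  have e2 : ∑ i, ((starRingEnd ℂ) (x i) * (Z.mulVec (star y)) i)
      = ∑ i, ∑ j, (starRingEnd ℂ) ((starRingEnd ℂ) (Z i j) * (y j * x i)) := by
    refine Finset.sum_congr rfl fun i _ => ?_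
    simp only [Matrix.mulVec, dotProduct, Pi.star_apply]
    rw [Finset.mul_sum]
    refine Finset.sum_congr rfl fun j _ => ?_
    rw [_root_.map_mul, _root_.map_mul]
    simp only [RCLike.star_def, Complex.conj_conj]
    ring
  have e3 : ∑ i, ((starRingEnd ℂ) (x i) * (Z.mulVec (star y)) i)
      = (starRingEnd ℂ) (∑ i, ((starRingEnd ℂ) ((Z.mulVec (star x)) i) * y i)) := by
    rw [e1, e2, map_sum]
    rw [Finset.sum_comm]
    refine Finset.sum_congr rfl fun i _ => ?_
    rw [map_sum]
    refine Finset.sum_congr rfl fun j _ => ?_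
    rw [hsym i j]
    ring_nf
  have e4 : ∀ w : ℂ, ((starRingEnd ℂ) w).re = w.re := fun w => Complex.conj_re w
  calc ∑ i, ((starRingEnd ℂ) ((Z.mulVec (star x)) i) * y i).re
      = (∑ i, ((starRingEnd ℂ) ((Z.mulVec (star x)) i) * y i)).re := by
        rw [Complex.re_sum]
    _ = ((starRingEnd ℂ) (∑ i, ((starRingEnd ℂ) ((Z.mulVec (star x)) i) * y i))).re := by
        rw [e4]
    _ = (∑ i, ((starRingEnd ℂ) (x i) * (Z.mulVec (star y)) i)).re := by rw [← e3]
    _ = ∑ i, ((starRingEnd ℂ) (x i) * (Z.mulVec (star y)) i).re := by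
        rw [Complex.re_sum]

/-- Multiplication by `I`, as a real-linear map. -/
def JL (m : ℕ) : (Fin m → ℂ) →ₗ[ℝ] (Fin m → ℂ) where
  toFun x := Complex.I • x
  map_add' x y := smul_add _ _ _
  map_smul' r x := smul_comm _ _ _

theorem part1 (n : ℕ) (W : Submodule ℝ (Matrix (Fin (n + 1)) (Fin (n + 1)) ℂ))
    (hsymm : ∀ Z ∈ W, Zᵀ = Z)
    (hab : ∀ Z₁ ∈ W, ∀ Z₂ ∈ W,
      Z₁.map (starRingEnd ℂ) * Z₂ = Z₂.map (starRingEnd ℂ) * Z₁) :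
    Module.finrank ℝ W ≤ n + 1 := by
  set Psi : W →ₗ[ℝ] (EuclideanSpace ℝ (Fin (n+1) × Fin 2) →ₗ[ℝ] EuclideanSpace ℝ (Fin (n+1) × Fin 2)) :=
    ((eE (n+1)).conj).toLinearMap ∘ₗ ((PhiL (n+1)) ∘ₗ W.subtype) with hPsi
  have hPsiApply : ∀ (Z : W) (xV : EuclideanSpace ℝ (Fin (n+1) × Fin 2)),
      Psi Z xV = (eE (n+1)) (TL (Z : Matrix (Fin (n+1)) (Fin (n+1)) ℂ) ((eE (n+1)).symm xV)) := by
    intro Z xV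
    rw [hPsi]
    simp [LinearEquiv.conj_apply]
    rfl
  have hPsiInj : Function.Injective Psi := by
    rw [hPsi]
    simp only [LinearMap.coe_comp, LinearEquiv.coe_coe]
    exact (eE (n+1)).conj.injective.comp ((PhiL_inj (n+1)).comp (Submodule.injective_subtype W))
  -- conjugate of conjugate matrix
  have hmapmap : ∀ A : Matrix (Fin (n+1)) (Fin (n+1)) ℂ,
      (A.map (starRingEnd ℂ)).map (starRingEnd ℂ) = A := by
    intro A; ext i j; simp
  -- the hypotheses of key_bound
  have hsymS : ∀ T ∈ LinearMap.range Psi, T.IsSymmetric := by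
    rintro T ⟨Z, rfl⟩ x y
    rw [hPsiApply, hPsiApply]
    have hx : x = (eE (n+1)) ((eE (n+1)).symm x) := ((eE (n+1)).apply_symm_apply x).symm
    have hy : y = (eE (n+1)) ((eE (n+1)).symm y) := ((eE (n+1)).apply_symm_apply y).symm
    calc ⟪(eE (n+1)) (TL Z ((eE (n+1)).symm x)), y⟫
        = ⟪(eE (n+1)) (TL Z ((eE (n+1)).symm x)), (eE (n+1)) ((eE (n+1)).symm y)⟫ := by rw [← hy]
      _ = ∑ i, ((starRingEnd ℂ) ((TL (Z : Matrix (Fin (n+1)) (Fin (n+1)) ℂ) ((eE (n+1)).symm x)) i)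
            * ((eE (n+1)).symm y) i).re := inner_eE _ _
      _ = ∑ i, ((starRingEnd ℂ) (((eE (n+1)).symm x) i)
            * ((TL (Z : Matrix (Fin (n+1)) (Fin (n+1)) ℂ) ((eE (n+1)).symm y)) i)).re := by
          rw [TL_apply, TL_apply]
          exact symmB _ (hsymm Z Z.2) _ _
      _ = ⟪(eE (n+1)) ((eE (n+1)).symm x), (eE (n+1)) (TL Z ((eE (n+1)).symm y))⟫ := (inner_eE _ _).symm
      _ = ⟪x, (eE (n+1)) (TL Z ((eE (n+1)).symm y))⟫ := by rw [← hx]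
  have hTLcomp : ∀ Z₁ Z₂ : Matrix (Fin (n+1)) (Fin (n+1)) ℂ, ∀ x : Fin (n+1) → ℂ,
      TL Z₁ (TL Z₂ x) = (Z₁ * Z₂.map (starRingEnd ℂ)).mulVec x := by
    intro Z₁ Z₂ x
    rw [TL_apply, TL_apply, conj_mulVec, Matrix.mulVec_mulVec]
  have hcommS : ∀ T₁ ∈ LinearMap.range Psi, ∀ T₂ ∈ LinearMap.range Psi,
      T₁ ∘ₗ T₂ = T₂ ∘ₗ T₁ := by
    rintro T₁ ⟨Z₁, rfl⟩ T₂ ⟨Z₂, rfl⟩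
    have hc' : (Z₁ : Matrix (Fin (n+1)) (Fin (n+1)) ℂ) * (Z₂ : Matrix (Fin (n+1)) (Fin (n+1)) ℂ).map (starRingEnd ℂ)
        = (Z₂ : Matrix (Fin (n+1)) (Fin (n+1)) ℂ) * (Z₁ : Matrix (Fin (n+1)) (Fin (n+1)) ℂ).map (starRingEnd ℂ) := by
      have h0 := hab Z₁ Z₁.2 Z₂ Z₂.2
      have h1 := congrArg (fun M : Matrix (Fin (n+1)) (Fin (n+1)) ℂ => M.map (starRingEnd ℂ)) h0
      simpa only [Matrix.map_mul, hmapmap] using h1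
    ext x
    simp only [LinearMap.comp_apply]
    rw [hPsiApply, hPsiApply, hPsiApply, hPsiApply,
      LinearEquiv.symm_apply_apply, LinearEquiv.symm_apply_apply]
    rw [hTLcomp, hTLcomp, hc']
  -- the complex structure
  set JV : EuclideanSpace ℝ (Fin (n+1) × Fin 2) →ₗ[ℝ] EuclideanSpace ℝ (Fin (n+1) × Fin 2) := (eE (n+1)).conj (JL (n+1)) with hJV
  have hJVApply : ∀ xV : EuclideanSpace ℝ (Fin (n+1) × Fin 2), JV xV = (eE (n+1)) (JL (n+1) ((eE (n+1)).symm xV)) := by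
    intro xV; rw [hJV, LinearEquiv.conj_apply]; rfl
  have hJ2 : ∀ x : EuclideanSpace ℝ (Fin (n+1) × Fin 2), JV (JV x) = -x := by
    intro x
    rw [hJVApply, hJVApply, LinearEquiv.symm_apply_apply]
    have : JL (n+1) (JL (n+1) ((eE (n+1)).symm x)) = -((eE (n+1)).symm x) := by
      show Complex.I • (Complex.I • ((eE (n+1)).symm x)) = -((eE (n+1)).symm x)
      rw [smul_smul, Complex.I_mul_I, neg_one_smul]
    rw [this, map_neg, (eE (n+1)).apply_symm_apply]
  have hJO : ∀ x y : EuclideanSpace ℝ (Fin (n+1) × Fin 2), ⟪JV x, JV y⟫ = ⟪x, y⟫ := by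
    intro x y
    rw [hJVApply, hJVApply]
    rw [inner_eE]
    have hx : x = (eE (n+1)) ((eE (n+1)).symm x) := ((eE (n+1)).apply_symm_apply x).symm
    have hy : y = (eE (n+1)) ((eE (n+1)).symm y) := ((eE (n+1)).apply_symm_apply y).symm
    calc ∑ i, ((starRingEnd ℂ) ((JL (n+1) ((eE (n+1)).symm x)) i) * (JL (n+1) ((eE (n+1)).symm y)) i).re
        = ∑ i, ((starRingEnd ℂ) (((eE (n+1)).symm x) i) * ((eE (n+1)).symm y) i).re := by
          refine Finset.sum_congr rfl fun i _ => ?_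
          show ((starRingEnd ℂ) (Complex.I * ((eE (n+1)).symm x) i)
            * (Complex.I * ((eE (n+1)).symm y) i)).re = _
          rw [_root_.map_mul, Complex.conj_I]
          congr 1
          ring_nf
          rw [Complex.I_sq]
          ring
      _ = ⟪(eE (n+1)) ((eE (n+1)).symm x), (eE (n+1)) ((eE (n+1)).symm y)⟫ := (inner_eE _ _).symm
      _ = ⟪x, y⟫ := by rw [← hx, ← hy]
  have hJa : ∀ T ∈ LinearMap.range Psi, ∀ x : EuclideanSpace ℝ (Fin (n+1) × Fin 2), T (JV x) = -(JV (T x)) := by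
    rintro T ⟨Z, rfl⟩ x
    rw [hJVApply, hPsiApply, hPsiApply, LinearEquiv.symm_apply_apply, hJVApply,
      LinearEquiv.symm_apply_apply, ← map_neg]
    congr 1
    rw [TL_apply, TL_apply]
    have hstar : star (JL (n+1) ((eE (n+1)).symm x)) = (-Complex.I) • star ((eE (n+1)).symm x) := by
      funext i
      show star (Complex.I * ((eE (n+1)).symm x) i) = -Complex.I * star (((eE (n+1)).symm x) i)
      rw [star_mul']
      simp [Complex.conj_I]
    rw [hstar, Matrix.mulVec_smul]
    show (-Complex.I) • ((Z : Matrix (Fin (n+1)) (Fin (n+1)) ℂ).mulVec (star ((eE (n+1)).symm x)))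
      = -(Complex.I • ((Z : Matrix (Fin (n+1)) (Fin (n+1)) ℂ).mulVec (star ((eE (n+1)).symm x))))
    rw [neg_smul]
  -- finish
  have hVrank : finrank ℝ (EuclideanSpace ℝ (Fin (n+1) × Fin 2)) = 2 * (n+1) := by
    rw [finrank_euclideanSpace]
    simp [Fintype.card_prod]
    ring
  have hmain := key_bound (2 * (n+1)) (EuclideanSpace ℝ (Fin (n+1) × Fin 2)) (LinearMap.range Psi) JV
    (le_of_eq hVrank) hsymS hcommS hJ2 hJO hJa
  have hrk : finrank ℝ (LinearMap.range Psi) = finrank ℝ W :=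
    LinearMap.finrank_range_of_inj hPsiInj
  omega

/-- Real diagonal matrices, as a linear map from `Fin m → ℝ`. -/
def diagL (m : ℕ) : (Fin m → ℝ) →ₗ[ℝ] Matrix (Fin m) (Fin m) ℂ where
  toFun d := Matrix.diagonal (fun i => (d i : ℂ))
  map_add' d₁ d₂ := by
    ext i j
    rcases eq_or_ne i j with rfl | hij
    · simp [Matrix.diagonal_apply_eq]
    · simp [Matrix.diagonal_apply_ne _ hij]
  map_smul' r d := by
    ext i j
    rcases eq_or_ne i j with rfl | hij
    · simp [Matrix.diagonal_apply_eq, Complex.real_smul]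
    · simp [Matrix.diagonal_apply_ne _ hij]

theorem diagL_inj (m : ℕ) : Function.Injective (diagL m) := by
  intro d₁ d₂ h
  funext i
  have h1 := congrFun (congrFun (congrArg Matrix.of.symm h) i) i
  simp only [diagL, LinearMap.coe_mk, AddHom.coe_mk] at h
  have := congrFun (congrFun h i) i
  rw [show (Matrix.diagonal (fun i => ((d₁ i : ℂ))) i i) = (d₁ i : ℂ) from
    Matrix.diagonal_apply_eq _ i,
    show (Matrix.diagonal (fun i => ((d₂ i : ℂ))) i i) = (d₂ i : ℂ) from
    Matrix.diagonal_apply_eq _ i] at this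
  exact_mod_cast this


/- STATEMENT 9: A real linear subspace W of the complex symmetric (n+1)×(n+1) matrices
with conj(Z₁)·Z₂ = conj(Z₂)·Z₁ (conj = entrywise conjugation) for all Z₁, Z₂ ∈ W has
dim_ℝ W ≤ n+1; the real diagonal matrices form such a subspace of real dimension n+1. -/
theorem abelian_subspace_sp_over_u (n : ℕ) :
    (∀ W : Submodule ℝ (Matrix (Fin (n + 1)) (Fin (n + 1)) ℂ),
        (∀ Z ∈ W, Zᵀ = Z) →
        (∀ Z₁ ∈ W, ∀ Z₂ ∈ W,
          Z₁.map (starRingEnd ℂ) * Z₂ = Z₂.map (starRingEnd ℂ) * Z₁) →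
        Module.finrank ℝ W ≤ n + 1) ∧
    (∃ D : Submodule ℝ (Matrix (Fin (n + 1)) (Fin (n + 1)) ℂ),
        (D : Set (Matrix (Fin (n + 1)) (Fin (n + 1)) ℂ)) =
          {Z | ∃ d : Fin (n + 1) → ℝ, Z = Matrix.diagonal (fun i => (d i : ℂ))} ∧
        (∀ Z ∈ D, Zᵀ = Z) ∧
        (∀ Z₁ ∈ D, ∀ Z₂ ∈ D,
          Z₁.map (starRingEnd ℂ) * Z₂ = Z₂.map (starRingEnd ℂ) * Z₁) ∧
        Module.finrank ℝ D = n + 1) := by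
  constructor
  · intro W h1 h2
    exact part1 n W h1 h2
  · refine ⟨LinearMap.range (diagL (n + 1)), ?_, ?_, ?_, ?_⟩
    · ext Z
      simp only [SetLike.mem_coe, LinearMap.mem_range, Set.mem_setOf_eq]
      constructor
      · rintro ⟨d, rfl⟩; exact ⟨d, rfl⟩
      · rintro ⟨d, rfl⟩; exact ⟨d, rfl⟩
    · rintro Z ⟨d, rfl⟩
      exact Matrix.diagonal_transpose _
    · rintro Z₁ ⟨d₁, rfl⟩ Z₂ ⟨d₂, rfl⟩
      have hmap : ∀ d : Fin (n + 1) → ℝ,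
          (Matrix.diagonal (fun i => (d i : ℂ))).map (starRingEnd ℂ)
            = Matrix.diagonal (fun i => (d i : ℂ)) := by
        intro d
        rw [Matrix.diagonal_map (by simp)]
        congr 1
        funext i
        simp [Complex.conj_ofReal]
      show ((diagL (n+1)) d₁).map (starRingEnd ℂ) * ((diagL (n+1)) d₂)
        = ((diagL (n+1)) d₂).map (starRingEnd ℂ) * ((diagL (n+1)) d₁)
      show (Matrix.diagonal (fun i => (d₁ i : ℂ))).map (starRingEnd ℂ)
          * Matrix.diagonal (fun i => (d₂ i : ℂ))
        = (Matrix.diagonal (fun i => (d₂ i : ℂ))).map (starRingEnd ℂ)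
          * Matrix.diagonal (fun i => (d₁ i : ℂ))
      rw [hmap, hmap, Matrix.diagonal_mul_diagonal, Matrix.diagonal_mul_diagonal,
        show (fun i => (d₁ i : ℂ) * (d₂ i : ℂ)) = (fun i => (d₂ i : ℂ) * (d₁ i : ℂ)) from
          funext fun i => mul_comm _ _]
    · rw [LinearMap.finrank_range_of_inj (diagL_inj (n + 1))]
      simp [Module.finrank_pi]
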